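/- Let X be exponentially distributed with rate 1 and ρ ≥ 1. Then E[log₂(1+ρX)] + log₂(E[1/(1+ρX)]) < 0.48 + log₂(log₂(1+ρ)). -/

import Mathlib

open Real MeasureTheory Set Filter

lemma integral_xexp : ∫ x in Set.Ioi (0:ℝ), x * Real.exp (-x) = 1 := by
  have h := Real.Gamma_eq_integral (s := 2) (by norm_num)
  have h2 : Real.Gamma 2 = 1 := by
    rw [show (2:ℝ) = 1 + 1 by norm_num, Real.Gamma_add_one one_ne_zero, Real.Gamma_one, mul_one]
  rw [h2, show (2:ℝ) - 1 = 1 by norm_num] at h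
  simp only [Real.rpow_one, mul_comm] at h
  exact h.symm

lemma int_xexp : IntegrableOn (fun x : ℝ => x * Real.exp (-x)) (Set.Ioi 0) := by
  have h := Real.GammaIntegral_convergent (s := 2) (by norm_num)
  rw [show (2:ℝ) - 1 = 1 by norm_num] at h
  simpa only [Real.rpow_one, mul_comm] using h

lemma int_exp : IntegrableOn (fun x : ℝ => Real.exp (-x)) (Set.Ioi 0) := by
  simpa using exp_neg_integrableOn_Ioi (0:ℝ) (b := 1) one_pos

lemma int_logexp {ρ : ℝ} (hρ : 0 < ρ) :
    IntegrableOn (fun x : ℝ => Real.log (1 + ρ * x) * Real.exp (-x)) (Set.Ioi 0) := by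
  apply (int_xexp.const_mul ρ).mono'
  · apply Measurable.aestronglyMeasurable
    exact ((measurable_const.add (measurable_const.mul measurable_id)).log).mul
      (measurable_id.neg.exp)
  · filter_upwards [ae_restrict_mem measurableSet_Ioi] with x hx
    have hx0 : (0:ℝ) < x := hx
    have h1 : (0:ℝ) < 1 + ρ * x := by nlinarith
    rw [Real.norm_eq_abs, abs_of_nonneg (mul_nonneg (Real.log_nonneg (by nlinarith)) (Real.exp_nonneg _))]
    have hlog : Real.log (1 + ρ * x) ≤ ρ * x := by
      have := Real.log_le_sub_one_of_pos h1
      linarith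
    calc Real.log (1 + ρ * x) * Real.exp (-x) ≤ (ρ * x) * Real.exp (-x) := by
          apply mul_le_mul_of_nonneg_right hlog (Real.exp_nonneg _)
      _ = ρ * (x * Real.exp (-x)) := by ring

lemma int_inv {ρ : ℝ} (hρ : 0 < ρ) :
    IntegrableOn (fun x : ℝ => Real.exp (-x) / (1 + ρ * x)) (Set.Ioi 0) := by
  apply int_exp.mono'
  · apply Measurable.aestronglyMeasurable
    exact (measurable_id.neg.exp).div (measurable_const.add (measurable_const.mul measurable_id))
  · filter_upwards [ae_restrict_mem measurableSet_Ioi] with x hx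
    have hx0 : (0:ℝ) < x := hx
    have h1 : (1:ℝ) ≤ 1 + ρ * x := by nlinarith
    rw [Real.norm_eq_abs, abs_of_nonneg (by positivity)]
    calc Real.exp (-x) / (1 + ρ * x) ≤ Real.exp (-x) / 1 := by
          apply div_le_div_of_nonneg_left (by positivity) one_pos h1
      _ = Real.exp (-x) := div_one _

lemma tendsto_logexp {ρ : ℝ} (hρ : 0 < ρ) :
    Tendsto (fun x : ℝ => Real.log (1 + ρ * x) * Real.exp (-x)) atTop (nhds 0) := by
  have h := (Real.tendsto_pow_mul_exp_neg_atTop_nhds_zero 1).const_mul ρ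
  rw [mul_zero] at h
  apply tendsto_of_tendsto_of_tendsto_of_le_of_le' tendsto_const_nhds h
  · filter_upwards [eventually_ge_atTop (0:ℝ)] with x hx
    exact mul_nonneg (Real.log_nonneg (by nlinarith)) (Real.exp_nonneg _)
  · filter_upwards [eventually_ge_atTop (0:ℝ)] with x hx
    have h1 : (0:ℝ) < 1 + ρ * x := by nlinarith
    have hlog : Real.log (1 + ρ * x) ≤ ρ * x := by
      have := Real.log_le_sub_one_of_pos h1; linarith
    calc Real.log (1 + ρ * x) * Real.exp (-x) ≤ (ρ * x) * Real.exp (-x) :=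
          mul_le_mul_of_nonneg_right hlog (Real.exp_nonneg _)
      _ = ρ * (x ^ 1 * Real.exp (-x)) := by ring

lemma key_identity {ρ : ℝ} (hρ : 0 < ρ) :
    ∫ x in Set.Ioi (0:ℝ), Real.log (1 + ρ * x) * Real.exp (-x)
      = ρ * ∫ x in Set.Ioi (0:ℝ), Real.exp (-x) / (1 + ρ * x) := by
  have hderiv : ∀ x ∈ Set.Ici (0:ℝ),
      HasDerivAt (fun x => -(Real.log (1 + ρ * x) * Real.exp (-x)))
        (Real.log (1 + ρ * x) * Real.exp (-x) - ρ * (Real.exp (-x) / (1 + ρ * x))) x := by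
    intro x hx
    have h1 : (0:ℝ) < 1 + ρ * x := by
      have : (0:ℝ) ≤ x := hx
      nlinarith
    have hu : HasDerivAt (fun x : ℝ => Real.log (1 + ρ * x)) (ρ / (1 + ρ * x)) x := by
      have : HasDerivAt (fun x : ℝ => 1 + ρ * x) ρ x := by
        simpa using ((hasDerivAt_id x).const_mul ρ).const_add 1
      exact this.log (ne_of_gt h1)
    have hv : HasDerivAt (fun x : ℝ => Real.exp (-x)) (Real.exp (-x) * (-1)) x :=
      ((hasDerivAt_id x).neg).exp
    have : HasDerivAt (fun x => -(Real.log (1 + ρ * x) * Real.exp (-x))) _ x := (hu.mul hv).neg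
    convert this using 1
    ring
  have hint : IntegrableOn (fun x : ℝ =>
      Real.log (1 + ρ * x) * Real.exp (-x) - ρ * (Real.exp (-x) / (1 + ρ * x)))
      (Set.Ioi 0) := (int_logexp hρ).sub ((int_inv hρ).const_mul ρ)
  have htend : Tendsto (fun x : ℝ => -(Real.log (1 + ρ * x) * Real.exp (-x))) atTop (nhds 0) := by
    simpa using (tendsto_logexp hρ).neg
  have heq := integral_Ioi_of_hasDerivAt_of_tendsto' hderiv hint htend
  simp only [mul_zero, add_zero, Real.log_one, zero_mul, neg_zero, sub_zero, zero_sub, neg_neg] at heq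
  rw [integral_sub (int_logexp hρ) ((int_inv hρ).const_mul ρ), MeasureTheory.integral_const_mul] at heq
  linarith [heq]

lemma B_pos {ρ : ℝ} (hρ : 0 < ρ) :
    0 < ∫ x in Set.Ioi (0:ℝ), Real.exp (-x) / (1 + ρ * x) := by
  rw [setIntegral_pos_iff_support_of_nonneg_ae ?_ (int_inv hρ)]
  · have hsub : Set.Ioi (0:ℝ) ⊆ Function.support (fun x : ℝ => Real.exp (-x) / (1 + ρ * x)) := by
      intro x hx
      have hx0 : (0:ℝ) < x := hx
      have h1 : (0:ℝ) < 1 + ρ * x := by nlinarith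
      simp only [Function.mem_support]
      positivity
    rw [Set.inter_eq_right.mpr hsub]
    simp [Real.volume_Ioi]
  · filter_upwards [ae_restrict_mem measurableSet_Ioi] with x hx
    have hx0 : (0:ℝ) < x := hx
    have h1 : (0:ℝ) < 1 + ρ * x := by nlinarith
    positivity

lemma L_le {ρ : ℝ} (hρ : 0 < ρ) :
    ∫ x in Set.Ioi (0:ℝ), Real.log (1 + ρ * x) * Real.exp (-x) ≤ Real.log (1 + ρ) := by
  have h2 : (0:ℝ) < 1 + ρ := by linarith
  have he : (fun x : ℝ => (Real.log (1 + ρ) + ρ / (1 + ρ) * (x - 1)) * Real.exp (-x))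
      = fun x => (Real.log (1 + ρ) - ρ / (1 + ρ)) * Real.exp (-x)
          + ρ / (1 + ρ) * (x * Real.exp (-x)) := by
    funext x; ring
  have hint2 : IntegrableOn
      (fun x : ℝ => (Real.log (1 + ρ) + ρ / (1 + ρ) * (x - 1)) * Real.exp (-x))
      (Set.Ioi 0) := by
    rw [he]; exact (int_exp.const_mul _).add (int_xexp.const_mul _)
  have hmono : ∫ x in Set.Ioi (0:ℝ), Real.log (1 + ρ * x) * Real.exp (-x)
      ≤ ∫ x in Set.Ioi (0:ℝ), (Real.log (1 + ρ) + ρ / (1 + ρ) * (x - 1)) * Real.exp (-x) := by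
    apply setIntegral_mono_on (int_logexp hρ) hint2 measurableSet_Ioi
    intro x hx
    have hx0 : (0:ℝ) < x := hx
    have h1 : (0:ℝ) < 1 + ρ * x := by nlinarith
    have key : Real.log (1 + ρ * x) ≤ Real.log (1 + ρ) + ρ / (1 + ρ) * (x - 1) := by
      have hd : Real.log ((1 + ρ * x) / (1 + ρ))
          = Real.log (1 + ρ * x) - Real.log (1 + ρ) :=
        Real.log_div (ne_of_gt h1) (ne_of_gt h2)
      have hb := Real.log_le_sub_one_of_pos (div_pos h1 h2)
      have hq : (1 + ρ * x) / (1 + ρ) - 1 = ρ / (1 + ρ) * (x - 1) := by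
        field_simp; ring
      rw [hd, hq] at hb
      linarith
    exact mul_le_mul_of_nonneg_right key (Real.exp_nonneg _)
  have hval : ∫ x in Set.Ioi (0:ℝ),
      (Real.log (1 + ρ) + ρ / (1 + ρ) * (x - 1)) * Real.exp (-x) = Real.log (1 + ρ) := by
    rw [he, integral_add (int_exp.const_mul _) (int_xexp.const_mul _),
      MeasureTheory.integral_const_mul, MeasureTheory.integral_const_mul,
      integral_exp_neg_Ioi_zero, integral_xexp]
    ring
  linarith

lemma two_log_two_lt : 2 * Real.log 2 < (2:ℝ) ^ (0.48:ℝ) := by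
  have h1 : Real.log 2 < 0.6931471808 := Real.log_two_lt_d9
  have hlp : (0:ℝ) < Real.log 2 := Real.log_pos one_lt_two
  have h3 : ((2:ℝ) ^ (0.48:ℝ)) ^ (25:ℕ) = 4096 := by
    rw [← Real.rpow_natCast ((2:ℝ) ^ (0.48:ℝ)) 25, ← Real.rpow_mul (by norm_num)]
    rw [show (0.48:ℝ) * (25:ℕ) = ((12:ℕ):ℝ) by norm_num, Real.rpow_natCast]
    norm_num
  have h4 : (2 * Real.log 2) ^ (25:ℕ) < ((2:ℝ) ^ (0.48:ℝ)) ^ (25:ℕ) := by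
    rw [h3]
    calc (2 * Real.log 2) ^ (25:ℕ) < (1.3862943616:ℝ) ^ (25:ℕ) := by
          apply pow_lt_pow_left₀ (by linarith) (by positivity)
          norm_num
      _ < 4096 := by norm_num
  exact lt_of_pow_lt_pow_left₀ 25 (by positivity) h4

/-- For `X` exponential with rate 1 and `ρ ≥ 1`, the SISO Rayleigh gap satisfies
`E[log₂(1+ρX)] + log₂ E[1/(1+ρX)] < 0.48 + log₂(log₂(1+ρ))`. -/
theorem rayleigh_gap_bound (ρ : ℝ) (hρ : 1 ≤ ρ) :
    (∫ x in Set.Ioi (0 : ℝ), Real.logb 2 (1 + ρ * x) * Real.exp (-x))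
        + Real.logb 2 (∫ x in Set.Ioi (0 : ℝ), (1 / (1 + ρ * x)) * Real.exp (-x))
      < 0.48 + Real.logb 2 (Real.logb 2 (1 + ρ)) := by
  have hρ0 : (0:ℝ) < ρ := lt_of_lt_of_le one_pos hρ
  have h1ρ : (0:ℝ) < 1 + ρ := by linarith
  have hlog2pos : (0:ℝ) < Real.log 2 := Real.log_pos one_lt_two
  set L := ∫ x in Set.Ioi (0:ℝ), Real.log (1 + ρ * x) * Real.exp (-x) with hLdef
  set B := ∫ x in Set.Ioi (0:ℝ), Real.exp (-x) / (1 + ρ * x) with hBdef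
  have hA : (∫ x in Set.Ioi (0:ℝ), Real.logb 2 (1 + ρ * x) * Real.exp (-x))
      = L / Real.log 2 := by
    rw [hLdef, ← integral_div]
    congr 1
    funext x
    rw [Real.logb]
    ring
  have hBeq : (∫ x in Set.Ioi (0:ℝ), (1 / (1 + ρ * x)) * Real.exp (-x)) = B := by
    rw [hBdef]
    congr 1
    funext x
    ring
  have hLle : L ≤ Real.log (1 + ρ) := L_le hρ0
  have hid : L = ρ * B := key_identity hρ0
  have hBpos : (0:ℝ) < B := B_pos hρ0
  have hBle : B ≤ Real.log (1 + ρ) / ρ := by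
    rw [le_div_iff₀ hρ0]
    rw [hid] at hLle
    linarith
  set C := Real.logb 2 (1 + ρ) with hCdef
  have hC1 : (1:ℝ) ≤ C := by
    have h22 : Real.logb 2 2 = 1 := Real.logb_self_eq_one (by norm_num)
    calc (1:ℝ) = Real.logb 2 2 := h22.symm
      _ ≤ Real.logb 2 (1 + ρ) := Real.logb_le_logb_of_le one_lt_two two_pos (by linarith)
  have hCpos : (0:ℝ) < C := lt_of_lt_of_le one_pos hC1
  have hlogC : Real.log (1 + ρ) = Real.log 2 * C := by
    rw [hCdef, Real.logb]
    field_simp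
  have hAle : L / Real.log 2 ≤ C := by
    rw [div_le_iff₀ hlog2pos]
    rw [hlogC] at hLle
    linarith
  have hBlog : Real.logb 2 B ≤ Real.logb 2 (Real.log 2 / ρ * C) := by
    apply Real.logb_le_logb_of_le one_lt_two hBpos
    rw [show Real.log 2 / ρ * C = Real.log 2 * C / ρ by ring, ← hlogC]
    exact hBle
  have hsplit : Real.logb 2 (Real.log 2 / ρ * C)
      = Real.logb 2 (Real.log 2 / ρ) + Real.logb 2 C :=
    Real.logb_mul (by positivity) (ne_of_gt hCpos)
  have hcomb : C + Real.logb 2 (Real.log 2 / ρ)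
      = Real.logb 2 ((1 + ρ) * (Real.log 2 / ρ)) := by
    rw [Real.logb_mul (ne_of_gt h1ρ) (by positivity), hCdef]
  have hTle : (1 + ρ) * (Real.log 2 / ρ) ≤ 2 * Real.log 2 := by
    have hfrac : (1 + ρ) / ρ ≤ 2 := by
      rw [div_le_iff₀ hρ0]
      linarith
    calc (1 + ρ) * (Real.log 2 / ρ) = (1 + ρ) / ρ * Real.log 2 := by ring
      _ ≤ 2 * Real.log 2 := mul_le_mul_of_nonneg_right hfrac hlog2pos.le
  have hfinal : Real.logb 2 ((1 + ρ) * (Real.log 2 / ρ)) < 0.48 := by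
    calc Real.logb 2 ((1 + ρ) * (Real.log 2 / ρ))
        ≤ Real.logb 2 (2 * Real.log 2) :=
          Real.logb_le_logb_of_le one_lt_two (by positivity) hTle
      _ < Real.logb 2 ((2:ℝ) ^ (0.48:ℝ)) :=
          Real.logb_lt_logb one_lt_two (by positivity) two_log_two_lt
      _ = 0.48 := Real.logb_rpow (by norm_num) (by norm_num)
  rw [hA, hBeq]
  calc L / Real.log 2 + Real.logb 2 B
      ≤ C + Real.logb 2 (Real.log 2 / ρ * C) := add_le_add hAle hBlog
    _ = (C + Real.logb 2 (Real.log 2 / ρ)) + Real.logb 2 C := by rw [hsplit]; ring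
    _ = Real.logb 2 ((1 + ρ) * (Real.log 2 / ρ)) + Real.logb 2 C := by rw [hcomb]
    _ < 0.48 + Real.logb 2 C := by linarith
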